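/- Fix real numbers ν₁, ν₂ > 0 such that ν₂⁴/ν₁⁴ is rational, and fix positive integers j₁*, j₂* with ν₁·j₁* ≠ ν₂·j₂*. Then the set S̃ of pairs (μ, m) ∈ (0,∞) × (0,∞) such that m is rational, μν₁⁴ is rational, m/(μν₁⁴) is not equal to any natural number, m/(μν₂⁴) is not equal to any natural number, ((μν₁⁴(j₁*)⁴ + m)/(μν₂⁴(j₂*)⁴ + m))^(1/2) is irrational, and (ν₁²/ν₂²)·((μν₁⁴(j₁*)⁴ + m)/(μν₂⁴(j₂*)⁴ + m))^(1/2) is irrational, is dense in (0,∞) × (0,∞) (with the product topology inherited from ℝ²). -/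

import Mathlib

lemma irr_sqrt_of_val_neg_one (ℓ : ℕ) (hℓ : ℓ.Prime) {s : ℚ} (hs : 0 < s)
    (hv : padicValRat ℓ s = -1) : Irrational (Real.sqrt (s : ℝ)) := by
  haveI : Fact ℓ.Prime := ⟨hℓ⟩
  rw [irrational_sqrt_ratCast_iff_of_nonneg hs.le]
  rintro ⟨y, hy⟩
  have hy0 : y ≠ 0 := by rintro rfl; simp at hy; exact hs.ne' hy
  rw [hy, padicValRat.mul hy0 hy0] at hv
  omega

lemma val_k_div_l (ℓ : ℕ) (hℓ : ℓ.Prime) (k : ℤ) (hk : ¬ (ℓ:ℤ) ∣ k) :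
    padicValRat ℓ ((k : ℚ) / (ℓ : ℚ)) = -1 := by
  haveI : Fact ℓ.Prime := ⟨hℓ⟩
  have hkz : k ≠ 0 := by rintro rfl; exact hk (dvd_zero _)
  have hk0 : (k:ℚ) ≠ 0 := Int.cast_ne_zero.mpr hkz
  have hl0 : ((ℓ:ℚ)) ≠ 0 := by exact_mod_cast hℓ.ne_zero
  rw [padicValRat.div hk0 hl0]
  have h1 : padicValRat ℓ (k:ℚ) = 0 := by
    rw [padicValRat.of_int, padicValInt.eq_zero_of_not_dvd hk]; simp
  have h2 : padicValRat ℓ ((ℓ:ℕ):ℚ) = 1 := padicValRat.self hℓ.one_lt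
  rw [h1, h2]; ring

lemma val_zero_of_gt (ℓ : ℕ) {r : ℚ} (hr : r ≠ 0)
    (h1 : r.num.natAbs < ℓ) (h2 : r.den < ℓ) : padicValRat ℓ r = 0 := by
  have hn : ¬ ℓ ∣ r.num.natAbs :=
    Nat.not_dvd_of_pos_of_lt (Int.natAbs_pos.mpr (Rat.num_ne_zero.mpr hr)) h1
  have hd : ¬ ℓ ∣ r.den := Nat.not_dvd_of_pos_of_lt r.pos h2
  rw [padicValRat_def, padicValInt, padicValNat.eq_zero_of_not_dvd hn,
    padicValNat.eq_zero_of_not_dvd hd]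
  simp

set_option maxHeartbeats 2000000

/-- Lemma 2.4 of the paper: the set `S̃` of model parameters `(μ, m)` is dense in
`(0,∞) × (0,∞)`. -/
theorem S_tilde_dense
    (ν₁ ν₂ : ℝ) (hν₁ : 0 < ν₁) (hν₂ : 0 < ν₂)
    (hratio : ∃ q : ℚ, (q : ℝ) = ν₂ ^ 4 / ν₁ ^ 4)
    (j₁ j₂ : ℕ) (hj₁ : 0 < j₁) (hj₂ : 0 < j₂)
    (hneq : ν₁ * (j₁ : ℝ) ≠ ν₂ * (j₂ : ℝ)) :
    Set.Ioi (0 : ℝ) ×ˢ Set.Ioi (0 : ℝ) ⊆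
      closure {p : ℝ × ℝ | p.1 ∈ Set.Ioi (0 : ℝ) ∧ p.2 ∈ Set.Ioi (0 : ℝ) ∧
        (∃ q : ℚ, (q : ℝ) = p.2) ∧
        (∃ q : ℚ, (q : ℝ) = p.1 * ν₁ ^ 4) ∧
        (∀ n : ℕ, p.2 / (p.1 * ν₁ ^ 4) ≠ (n : ℝ)) ∧
        (∀ n : ℕ, p.2 / (p.1 * ν₂ ^ 4) ≠ (n : ℝ)) ∧
        Irrational (Real.sqrt ((p.1 * ν₁ ^ 4 * (j₁ : ℝ) ^ 4 + p.2) /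
          (p.1 * ν₂ ^ 4 * (j₂ : ℝ) ^ 4 + p.2))) ∧
        Irrational ((ν₁ ^ 2 / ν₂ ^ 2) * Real.sqrt ((p.1 * ν₁ ^ 4 * (j₁ : ℝ) ^ 4 + p.2) /
          (p.1 * ν₂ ^ 4 * (j₂ : ℝ) ^ 4 + p.2)))} := by
  rintro ⟨μ₀, m₀⟩ ⟨hμ₀, hm₀⟩
  simp only [Set.mem_Ioi] at hμ₀ hm₀
  rw [Metric.mem_closure_iff]
  intro ε hε
  obtain ⟨r, hr⟩ := hratio
  have hν₁4 : (0:ℝ) < ν₁^4 := by positivity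
  have hν₂4 : (0:ℝ) < ν₂^4 := by positivity
  have hrR : (0:ℝ) < (r:ℝ) := by rw [hr]; positivity
  have hrpos : 0 < r := by exact_mod_cast hrR
  set a : ℚ := (j₁:ℚ)^4 with ha_def
  set b : ℚ := r * (j₂:ℚ)^4 with hb_def
  have hj₁R : (0:ℝ) < (j₁:ℝ) := by exact_mod_cast hj₁
  have hj₂R : (0:ℝ) < (j₂:ℝ) := by exact_mod_cast hj₂
  have hapos : 0 < a := by positivity
  have hbpos : 0 < b := by positivity
  have haR : ((a:ℚ):ℝ) = (j₁:ℝ)^4 := by rw [ha_def]; push_cast; ring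
  have hbR : ((b:ℚ):ℝ) = (r:ℝ) * (j₂:ℝ)^4 := by rw [hb_def]; push_cast; ring
  have hab : a ≠ b := by
    intro h
    apply hneq
    have h4 : (ν₁*(j₁:ℝ))^4 = (ν₂*(j₂:ℝ))^4 := by
      have hcast : ((a:ℚ):ℝ) = ((b:ℚ):ℝ) := by exact_mod_cast h
      rw [haR, hbR, hr] at hcast
      field_simp at hcast
      rw [mul_pow, mul_pow]
      linear_combination hcast
    exact (pow_left_inj₀ (by positivity) (by positivity) (by norm_num)).mp h4
  -- choose rational q close to A := μ₀ ν₁⁴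
  set A : ℝ := μ₀ * ν₁^4 with hA_def
  have hApos : 0 < A := by positivity
  set δ : ℝ := min (ε * ν₁^4) A / 2 with hδ_def
  have hδpos : 0 < δ := by
    have := lt_min (by positivity : (0:ℝ) < ε * ν₁^4) hApos
    positivity
  obtain ⟨q, hq1, hq2⟩ := exists_rat_btwn (show A - δ < A by linarith)
  have hδA : δ ≤ A/2 := by
    have := min_le_right (ε * ν₁^4) A
    rw [hδ_def]; linarith
  have hqR : (0:ℝ) < (q:ℝ) := by linarith
  have hqpos : (0:ℚ) < q := by exact_mod_cast hqR
  have hμclose : |μ₀ - (q:ℝ)/ν₁^4| < ε/2 := by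
    have key : |μ₀ - (q:ℝ)/ν₁^4| * ν₁^4 = |A - q| := by
      rw [← abs_of_pos hν₁4, ← abs_mul]
      congr 1
      rw [hA_def]
      field_simp
      rw [abs_of_pos hν₁4]
    have hAq : |A - (q:ℝ)| < δ := by
      rw [abs_of_pos (by linarith)]; linarith
    have hδ2 : δ ≤ ε * ν₁^4 / 2 := by
      have := min_le_left (ε * ν₁^4) A
      rw [hδ_def]; linarith
    have : |μ₀ - (q:ℝ)/ν₁^4| * ν₁^4 < (ε/2) * ν₁^4 := by
      rw [key]; linarith
    exact lt_of_mul_lt_mul_right this hν₁4.le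
  -- choose irrational t₁ near t₀ := m₀ / q
  set t₀ : ℝ := m₀ / q with ht₀_def
  have ht₀ : 0 < t₀ := by positivity
  set s' : ℝ := min (t₀/2) (ε/(4*q)) with hs'_def
  have hs'pos : 0 < s' := by
    apply lt_min (by positivity) (by positivity)
  obtain ⟨t₁, ht₁irr, ht₁l, ht₁u⟩ := exists_irrational_btwn
    (show t₀ - s' < t₀ + s' by linarith)
  have hs't₀ : s' ≤ t₀/2 := min_le_left _ _
  have hs'ε : s' ≤ ε/(4*q) := min_le_right _ _
  have ht₁pos : 0 < t₁ := by linarith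
  have ht₁rirr : Irrational (t₁ / (r:ℝ)) := ht₁irr.div_ratCast hrpos.ne'
  set N₁ : ℤ := ⌊t₁⌋ with hN₁_def
  set N₂ : ℤ := ⌊t₁ / (r:ℝ)⌋ with hN₂_def
  have hf1l : (N₁:ℝ) < t₁ := (Int.floor_le t₁).lt_of_ne (fun h => ht₁irr.ne_int N₁ h.symm)
  have hf1u : t₁ < N₁ + 1 := Int.lt_floor_add_one t₁
  have hf2l : (N₂:ℝ) < t₁/(r:ℝ) :=
    (Int.floor_le _).lt_of_ne (fun h => ht₁rirr.ne_int N₂ h.symm)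
  have hf2u : t₁/(r:ℝ) < N₂ + 1 := Int.lt_floor_add_one _
  have hf2l' : (r:ℝ)*(N₂:ℝ) < t₁ := by
    have := mul_lt_mul_of_pos_left hf2l hrR
    rwa [mul_div_cancel₀ _ hrR.ne'] at this
  have hf2u' : t₁ < (r:ℝ)*((N₂:ℝ)+1) := by
    have := mul_lt_mul_of_pos_left hf2u hrR
    rwa [mul_div_cancel₀ _ hrR.ne'] at this
  set η : ℝ := min (t₁ - N₁) (min ((N₁:ℝ)+1 - t₁) (min (t₁ - (r:ℝ)*N₂)
    (min ((r:ℝ)*((N₂:ℝ)+1) - t₁) (min (t₁/2) (ε/(4*q)))))) with hη_def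
  have hη1 : η ≤ t₁ - N₁ := min_le_left _ _
  have hη2 : η ≤ (N₁:ℝ)+1 - t₁ := (min_le_right _ _).trans (min_le_left _ _)
  have hη3 : η ≤ t₁ - (r:ℝ)*N₂ :=
    (min_le_right _ _).trans ((min_le_right _ _).trans (min_le_left _ _))
  have hη4 : η ≤ (r:ℝ)*((N₂:ℝ)+1) - t₁ :=
    (min_le_right _ _).trans ((min_le_right _ _).trans
      ((min_le_right _ _).trans (min_le_left _ _)))
  have hη5 : η ≤ t₁/2 :=
    (min_le_right _ _).trans ((min_le_right _ _).trans
      ((min_le_right _ _).trans ((min_le_right _ _).trans (min_le_left _ _))))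
  have hη6 : η ≤ ε/(4*q) :=
    (min_le_right _ _).trans ((min_le_right _ _).trans
      ((min_le_right _ _).trans ((min_le_right _ _).trans (min_le_right _ _))))
  have hηpos : 0 < η := by
    refine lt_min (by linarith) (lt_min (by linarith) (lt_min (by linarith)
      (lt_min (by linarith) (lt_min (by linarith) (by positivity)))))
  -- the x-side
  have hbt₁ : (0:ℝ) < (b:ℝ) + t₁ := by
    have : (0:ℝ) < (b:ℝ) := by exact_mod_cast hbpos
    linarith
  have hat₁ : (0:ℝ) < (a:ℝ) + t₁ := by
    have : (0:ℝ) < (a:ℝ) := by exact_mod_cast hapos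
    linarith
  set x₁ : ℝ := ((a:ℝ) + t₁) / ((b:ℝ) + t₁) with hx₁_def
  have hx₁pos : 0 < x₁ := by positivity
  have habR : (a:ℝ) ≠ (b:ℝ) := by exact_mod_cast hab
  have hx₁ne1 : x₁ ≠ 1 := by
    intro h
    rw [hx₁_def, div_eq_one_iff_eq hbt₁.ne'] at h
    exact habR (by linarith)
  set ψ : ℝ → ℝ := fun x => ((a:ℝ) - (b:ℝ)*x) / (x - 1) with hψ_def
  have hψcont : ContinuousAt ψ x₁ := by
    apply ContinuousAt.div
    · fun_prop
    · fun_prop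
    · exact sub_ne_zero.mpr hx₁ne1
  have hψx₁ : ψ x₁ = t₁ := by
    rw [hψ_def]
    show ((a:ℝ) - (b:ℝ)*x₁)/(x₁-1) = t₁
    rw [div_eq_iff (sub_ne_zero.mpr hx₁ne1), hx₁_def]
    field_simp
    ring
  rw [Metric.continuousAt_iff] at hψcont
  obtain ⟨ρ₀, hρ₀pos, hρ₀⟩ := hψcont η hηpos
  set ρ : ℝ := min ρ₀ (x₁/2) with hρ_def
  have hρpos : 0 < ρ := lt_min hρ₀pos (by positivity)
  have hρx₁ : ρ ≤ x₁/2 := min_le_right _ _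
  -- choose prime ℓ
  obtain ⟨ℓ, hℓge, hℓp⟩ := Nat.exists_infinite_primes
    (max (r.num.natAbs + 1) (max (r.den + 1) (⌈2/ρ⌉₊ + 1)))
  have hℓnum : r.num.natAbs < ℓ := by
    have := le_trans (le_max_left _ (max (r.den + 1) (⌈2/ρ⌉₊ + 1))) hℓge
    omega
  have hℓden : r.den < ℓ := by
    have := le_trans (le_trans (le_max_left _ (⌈2/ρ⌉₊ + 1))
      (le_max_right (r.num.natAbs + 1) _)) hℓge
    omega
  have hℓceil : ⌈2/ρ⌉₊ < ℓ := by
    have := le_trans (le_trans (le_max_right (r.den + 1) _)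
      (le_max_right (r.num.natAbs + 1) _)) hℓge
    omega
  have hℓR : (0:ℝ) < (ℓ:ℝ) := by exact_mod_cast hℓp.pos
  have hℓρ : 2 < (ℓ:ℝ) * ρ := by
    have h1 : (2:ℝ)/ρ ≤ (⌈2/ρ⌉₊ : ℝ) := Nat.le_ceil _
    have h2 : ((⌈2/ρ⌉₊ : ℕ):ℝ) < (ℓ:ℝ) := by exact_mod_cast hℓceil
    have : (2:ℝ)/ρ < (ℓ:ℝ) := lt_of_le_of_lt h1 h2
    calc (2:ℝ) = (2/ρ) * ρ := by field_simp
    _ < (ℓ:ℝ) * ρ := by exact mul_lt_mul_of_pos_right this hρpos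
  set k₀ : ℤ := ⌊(ℓ:ℝ) * x₁⌋ with hk₀_def
  have hk₀1 : (ℓ:ℝ)*x₁ - 1 < (k₀:ℝ) := Int.sub_one_lt_floor _
  have hk₀2 : ((k₀:ℤ):ℝ) ≤ (ℓ:ℝ)*x₁ := Int.floor_le _
  obtain ⟨k, hknd, hkl, hku⟩ : ∃ k : ℤ, ¬((ℓ:ℤ) ∣ k) ∧
      (ℓ:ℝ)*(x₁-ρ) < (k:ℝ) ∧ (k:ℝ) < (ℓ:ℝ)*(x₁+ρ) := by
    have hcase : ¬((ℓ:ℤ) ∣ k₀) ∨ ¬((ℓ:ℤ) ∣ (k₀+1)) := by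
      by_contra hcon
      push_neg at hcon
      have : (ℓ:ℤ) ∣ 1 := by
        have := dvd_sub hcon.2 hcon.1
        simpa using this
      have := Int.le_of_dvd one_pos this
      have h2 : 2 ≤ (ℓ:ℤ) := by exact_mod_cast hℓp.two_le
      omega
    rcases hcase with h | h
    · refine ⟨k₀, h, ?_, ?_⟩
      · rw [mul_sub]; linarith
      · rw [mul_add]; linarith
    · refine ⟨k₀+1, h, ?_, ?_⟩
      · push_cast; rw [mul_sub]; linarith
      · push_cast; rw [mul_add]; linarith
  set xq : ℚ := (k:ℚ)/(ℓ:ℚ) with hxq_def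
  have hxqR : ((xq:ℚ):ℝ) = (k:ℝ)/(ℓ:ℝ) := by rw [hxq_def]; push_cast; ring
  have hxclose : |(xq:ℝ) - x₁| < ρ := by
    rw [hxqR, abs_lt]
    constructor
    · have h : x₁ - ρ < (k:ℝ)/(ℓ:ℝ) := by
        rw [lt_div_iff₀ hℓR]
        calc (x₁ - ρ) * (ℓ:ℝ) = (ℓ:ℝ) * (x₁ - ρ) := by ring
        _ < (k:ℝ) := hkl
      linarith
    · have h : (k:ℝ)/(ℓ:ℝ) < x₁ + ρ := by
        rw [div_lt_iff₀ hℓR]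
        calc (k:ℝ) < (ℓ:ℝ) * (x₁ + ρ) := hku
        _ = (x₁ + ρ) * (ℓ:ℝ) := by ring
      linarith
  have hxqRpos : (0:ℝ) < (xq:ℝ) := by
    have := abs_lt.mp hxclose
    linarith [this.1]
  have hxqpos : 0 < xq := by exact_mod_cast hxqRpos
  have hψx : |ψ ((xq:ℚ):ℝ) - t₁| < η := by
    have hd : dist ((xq:ℚ):ℝ) x₁ < ρ₀ := by
      rw [Real.dist_eq]
      exact lt_of_lt_of_le hxclose (min_le_left _ _)
    have := hρ₀ hd
    rwa [hψx₁, Real.dist_eq] at this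
  have hxqne1 : xq ≠ 1 := by
    intro h
    apply hknd
    have hl0 : ((ℓ:ℕ):ℚ) ≠ 0 := by exact_mod_cast hℓp.ne_zero
    rw [hxq_def, div_eq_one_iff_eq hl0] at h
    have : k = (ℓ:ℤ) := by exact_mod_cast h
    rw [this]
  set tq : ℚ := (a - b*xq)/(xq - 1) with htq_def
  have htqR : ((tq:ℚ):ℝ) = ψ ((xq:ℚ):ℝ) := by
    rw [htq_def, hψ_def]
    push_cast
    ring
  have htclose : |((tq:ℚ):ℝ) - t₁| < η := by rw [htqR]; exact hψx
  have htcl := abs_lt.mp htclose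
  have htqRpos : (0:ℝ) < ((tq:ℚ):ℝ) := by linarith [htcl.1]
  have htqpos : 0 < tq := by exact_mod_cast htqRpos
  -- floor sandwich bounds for tq and tq / r
  have hT1l : (N₁:ℝ) < ((tq:ℚ):ℝ) := by linarith [htcl.1]
  have hT1u : ((tq:ℚ):ℝ) < (N₁:ℝ) + 1 := by linarith [htcl.2]
  have hT2l : (r:ℝ)*(N₂:ℝ) < ((tq:ℚ):ℝ) := by linarith [htcl.1]
  have hT2u : ((tq:ℚ):ℝ) < (r:ℝ)*((N₂:ℝ)+1) := by linarith [htcl.2]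
  -- closeness of m := q * tq to m₀
  have ht₁t₀ : |t₁ - t₀| < s' := by rw [abs_lt]; constructor <;> linarith
  have htqt₀ : |((tq:ℚ):ℝ) - t₀| < η + s' := by
    calc |((tq:ℚ):ℝ) - t₀| ≤ |((tq:ℚ):ℝ) - t₁| + |t₁ - t₀| := abs_sub_le _ _ _
    _ < η + s' := by linarith [htclose, ht₁t₀]
  have hmclose : |(q:ℝ)*((tq:ℚ):ℝ) - m₀| < ε/2 := by
    have hqt₀ : (q:ℝ) * t₀ = m₀ := by rw [ht₀_def]; field_simp
    have : |(q:ℝ)*((tq:ℚ):ℝ) - m₀| = (q:ℝ) * |((tq:ℚ):ℝ) - t₀| := by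
      have e : (q:ℝ)*((tq:ℚ):ℝ) - m₀ = (q:ℝ) * (((tq:ℚ):ℝ) - t₀) := by
        rw [mul_sub, hqt₀]
      rw [e, abs_mul, abs_of_pos hqR]
    rw [this]
    have hsum : η + s' ≤ ε/(2*q) := by
      have : ε/(4*q) + ε/(4*q) = ε/(2*q) := by field_simp; ring
      linarith
    calc (q:ℝ) * |((tq:ℚ):ℝ) - t₀| < (q:ℝ) * (η + s') :=
      mul_lt_mul_of_pos_left htqt₀ hqR
    _ ≤ (q:ℝ) * (ε/(2*q)) := mul_le_mul_of_nonneg_left hsum hqR.le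
    _ = ε/2 := by field_simp
  -- algebraic identity (a + tq)/(b + tq) = xq
  have hbtq : (0:ℚ) < b + tq := by positivity
  have haxb : a + tq = xq * (b + tq) := by
    rw [htq_def]
    field_simp [sub_ne_zero.mpr hxqne1]
    ring
  have hxid : (a + tq)/(b + tq) = xq := by
    rw [haxb, mul_div_assoc, div_self hbtq.ne', mul_one]
  -- valuations
  have hvx : padicValRat ℓ xq = -1 := val_k_div_l ℓ hℓp k hknd
  have hvr : padicValRat ℓ r = 0 := val_zero_of_gt ℓ hrpos.ne' hℓnum hℓden
  haveI : Fact ℓ.Prime := ⟨hℓp⟩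
  have hvxr : padicValRat ℓ (xq/r) = -1 := by
    rw [padicValRat.div hxqpos.ne' hrpos.ne', hvx, hvr]
    norm_num
  have hxrpos : (0:ℚ) < xq / r := by positivity
  -- useful real identities
  have hν₁0 : ν₁ ≠ 0 := hν₁.ne'
  have hν₂0 : ν₂ ≠ 0 := hν₂.ne'
  have hμν₁ : (q:ℝ)/ν₁^4 * ν₁^4 = (q:ℝ) := by field_simp
  have hμν₂ : (q:ℝ)/ν₁^4 * ν₂^4 = (q:ℝ) * (r:ℝ) := by
    rw [hr]; field_simp
  have hmR : (((q*tq:ℚ)):ℝ) = (q:ℝ) * ((tq:ℚ):ℝ) := by push_cast; ring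
  -- the quotient equals xq
  have hXeq : ((q:ℝ)/ν₁^4 * ν₁^4 * (j₁:ℝ)^4 + ((q*tq:ℚ):ℝ)) /
      ((q:ℝ)/ν₁^4 * ν₂^4 * (j₂:ℝ)^4 + ((q*tq:ℚ):ℝ)) = ((xq:ℚ):ℝ) := by
    rw [hμν₁, hμν₂, hmR]
    have e1 : (q:ℝ) * (j₁:ℝ)^4 + (q:ℝ)*((tq:ℚ):ℝ) = (q:ℝ) * (((a + tq : ℚ)):ℝ) := by
      push_cast [haR]
      ring
    have e2 : (q:ℝ) * (r:ℝ) * (j₂:ℝ)^4 + (q:ℝ)*((tq:ℚ):ℝ) = (q:ℝ) * (((b + tq : ℚ)):ℝ) := by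
      push_cast [hbR]
      ring
    rw [e1, e2, mul_div_mul_left _ _ hqR.ne']
    rw [show (((a + tq : ℚ)):ℝ) / (((b + tq : ℚ)):ℝ) = (((a+tq)/(b+tq) : ℚ) : ℝ) from by push_cast; ring]
    rw [hxid]
  -- sqrt of r
  have hsqrtr : Real.sqrt (r:ℝ) = ν₂^2/ν₁^2 := by
    rw [hr, show ν₂^4/ν₁^4 = (ν₂^2/ν₁^2)^2 from by ring, Real.sqrt_sq (by positivity)]
  refine ⟨((q:ℝ)/ν₁^4, ((q*tq:ℚ):ℝ)), ⟨?_, ?_, ?_, ?_, ?_, ?_, ?_, ?_⟩, ?_⟩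
  · exact Set.mem_Ioi.mpr (by positivity)
  · exact Set.mem_Ioi.mpr (by rw [hmR]; positivity)
  · exact ⟨q*tq, rfl⟩
  · exact ⟨q, hμν₁.symm⟩
  · intro n hn
    rw [hμν₁, hmR, mul_comm, mul_div_assoc, div_self hqR.ne', mul_one] at hn
    have h1 : (N₁:ℝ) < ((n:ℕ):ℝ) := by rw [← hn]; exact hT1l
    have h2 : ((n:ℕ):ℝ) < (N₁:ℝ) + 1 := by rw [← hn]; exact hT1u
    have h1' : N₁ < (n:ℤ) := by exact_mod_cast h1
    have h2' : ((n:ℤ):ℝ) < ((N₁ + 1 : ℤ):ℝ) := by push_cast; push_cast at h2; linarith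
    have h2'' : (n:ℤ) < N₁ + 1 := by exact_mod_cast h2'
    omega
  · intro n hn
    rw [hμν₂, hmR] at hn
    have hqr0 : (q:ℝ)*(r:ℝ) ≠ 0 := by positivity
    have hn' : ((tq:ℚ):ℝ) / (r:ℝ) = (n:ℝ) := by
      rw [← hn]
      field_simp
    have h1 : (N₂:ℝ) < ((n:ℕ):ℝ) := by
      rw [← hn', lt_div_iff₀ hrR]
      linarith
    have h2 : ((n:ℕ):ℝ) < (N₂:ℝ) + 1 := by
      rw [← hn', div_lt_iff₀ hrR]
      linarith
    have h1' : N₂ < (n:ℤ) := by exact_mod_cast h1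
    have h2' : ((n:ℤ):ℝ) < ((N₂ + 1 : ℤ):ℝ) := by push_cast; push_cast at h2; linarith
    have h2'' : (n:ℤ) < N₂ + 1 := by exact_mod_cast h2'
    omega
  · rw [hXeq]
    exact irr_sqrt_of_val_neg_one ℓ hℓp hxqpos hvx
  · rw [hXeq]
    have hkey : (ν₁^2/ν₂^2) * Real.sqrt ((xq:ℚ):ℝ) = Real.sqrt (((xq/r : ℚ)):ℝ) := by
      rw [show (((xq/r : ℚ)):ℝ) = ((xq:ℚ):ℝ)/(r:ℝ) from by push_cast; ring]
      rw [Real.sqrt_div hxqRpos.le, hsqrtr]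
      rw [eq_div_iff (by positivity : (ν₂^2/ν₁^2 : ℝ) ≠ 0)]
      field_simp
    rw [hkey]
    exact irr_sqrt_of_val_neg_one ℓ hℓp hxrpos hvxr
  · rw [Prod.dist_eq]
    apply max_lt
    · rw [Real.dist_eq]
      calc |μ₀ - (q:ℝ)/ν₁^4| < ε/2 := hμclose
      _ < ε := by linarith
    · rw [Real.dist_eq, hmR, abs_sub_comm]
      calc |(q:ℝ)*((tq:ℚ):ℝ) - m₀| < ε/2 := hmclose
      _ < ε := by linarith
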